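/- Let A be an arbitrary type, D a positive integer, and V a finite nonempty set of vectors in A^D. Let c ≥ 1 be a natural number. For distinct x, y ∈ V, let cap_c(x,y) denote the set consisting of the c smallest coordinates i ∈ {1,…,D} with x_i ≠ y_i (or all such coordinates, if x and y differ in fewer than c coordinates), and let cap_c(V) = ⋃_{x,y ∈ V, x ≠ y} cap_c(x,y). Then |cap_c(V)| ≤ c·(|V| − 1). -/

import Mathlib

open Finset

open scoped Classical

namespace Stmt13Aux

variable {A : Type*} {D : ℕ}

/-- number of coordinates `< i` where `x` and `y` differ -/
noncomputable def dd (i : ℕ) (x y : Fin D → A) : ℕ :=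
  (Finset.univ.filter fun b : Fin D => x b ≠ y b ∧ (b : ℕ) < i).card

lemma dd_zero (x y : Fin D → A) : dd 0 x y = 0 := by simp [dd]

lemma dd_mono {i j : ℕ} (h : i ≤ j) (x y : Fin D → A) : dd i x y ≤ dd j x y := by
  apply Finset.card_le_card
  intro b hb
  simp only [Finset.mem_filter, Finset.mem_univ, true_and] at hb ⊢
  exact ⟨hb.1, lt_of_lt_of_le hb.2 h⟩

lemma dd_succ_lt {i : ℕ} (b0 : Fin D) (hb : (b0 : ℕ) = i) (x y : Fin D → A)
    (hne : x b0 ≠ y b0) : dd i x y + 1 ≤ dd (i + 1) x y := by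
  have h2 : b0 ∉ (Finset.univ.filter fun b : Fin D => x b ≠ y b ∧ (b : ℕ) < i) := by
    simp [hb]
  have h3 : insert b0 (Finset.univ.filter fun b : Fin D => x b ≠ y b ∧ (b : ℕ) < i)
      ⊆ (Finset.univ.filter fun b : Fin D => x b ≠ y b ∧ (b : ℕ) < i + 1) := by
    intro b hbmem
    simp only [Finset.mem_insert, Finset.mem_filter, Finset.mem_univ, true_and] at hbmem ⊢
    rcases hbmem with rfl | hbmem
    · exact ⟨hne, by omega⟩
    · exact ⟨hbmem.1, by omega⟩
  calc dd i x y + 1 = (insert b0 (Finset.univ.filter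
        fun b : Fin D => x b ≠ y b ∧ (b : ℕ) < i)).card := (Finset.card_insert_of_notMem h2).symm
    _ ≤ _ := Finset.card_le_card h3

variable (V : Finset (Fin D → A))

/-- transitive closure of "differ in at most `k` coordinates below `i`" -/
def st (i k : ℕ) : Setoid ↥V :=
  Relation.EqvGen.setoid (fun x y => dd i (x : Fin D → A) (y : Fin D → A) ≤ k)

noncomputable def CC (i k : ℕ) : ℕ := Fintype.card (Quotient (st V i k))

lemma st_le {i j k : ℕ} (h : i ≤ j) {x y : ↥V} (hxy : (st V j k).r x y) :
    (st V i k).r x y :=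
  Relation.EqvGen.mono (fun a b hab => le_trans (dd_mono h _ _) hab) _ _ hxy

noncomputable def proj {i j k : ℕ} (h : i ≤ j) :
    Quotient (st V j k) → Quotient (st V i k) :=
  Quot.map id (fun a b hab => st_le V h hab)

lemma proj_surj {i j k : ℕ} (h : i ≤ j) : Function.Surjective (proj V h (k := k)) := by
  intro q
  obtain ⟨a, rfl⟩ := Quot.exists_rep q
  exact ⟨Quot.mk _ a, rfl⟩

lemma CC_mono {i j k : ℕ} (h : i ≤ j) : CC V i k ≤ CC V j k :=
  Fintype.card_le_of_surjective _ (proj_surj V h)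

lemma CC_zero (hV : V.Nonempty) (k : ℕ) : CC V 0 k = 1 := by
  obtain ⟨v, hv⟩ := hV
  rw [CC, Fintype.card_eq_one_iff]
  refine ⟨Quotient.mk _ ⟨v, hv⟩, ?_⟩
  refine Quot.ind (fun a => ?_)
  refine Quot.sound (Relation.EqvGen.rel _ _ ?_)
  simp [dd_zero]

lemma CC_le (i k : ℕ) : CC V i k ≤ V.card := by
  have h1 : CC V i k ≤ Fintype.card ↥V :=
    Fintype.card_le_of_surjective _ (Quotient.mk''_surjective (s₁ := st V i k))
  simpa [Fintype.card_coe] using h1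

lemma key {i : ℕ} (hiD : i < D) {m : ℕ}
    (x y : ↥V) (hxy : (x : Fin D → A) ⟨i, hiD⟩ ≠ (y : Fin D → A) ⟨i, hiD⟩)
    (hdxy : dd i (x : Fin D → A) (y : Fin D → A) ≤ m)
    (hmin : ∀ z w : ↥V, (z : Fin D → A) ⟨i, hiD⟩ ≠ (w : Fin D → A) ⟨i, hiD⟩ →
      m ≤ dd i (z : Fin D → A) (w : Fin D → A)) :
    CC V i m + 1 ≤ CC V (i + 1) m := by
  have heq : ∀ a b : ↥V, (st V (i+1) m).r a b →
      (a : Fin D → A) ⟨i, hiD⟩ = (b : Fin D → A) ⟨i, hiD⟩ := by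
    intro a b h
    induction h with
    | rel a b hab =>
        by_contra hne
        have h1 := hmin a b hne
        have h2 : dd i (a : Fin D → A) (b : Fin D → A) + 1
            ≤ dd (i + 1) (a : Fin D → A) (b : Fin D → A) :=
          dd_succ_lt ⟨i, hiD⟩ rfl _ _ hne
        omega
    | refl => rfl
    | symm _ _ _ ih => exact ih.symm
    | trans _ _ _ _ _ ih1 ih2 => exact ih1.trans ih2
  have hlt : CC V i m < CC V (i+1) m := by
    apply Fintype.card_lt_of_surjective_not_injective _ (proj_surj V (Nat.le_succ i) (k := m))
    intro hinj
    have hfx : proj V (Nat.le_succ i) (k := m) (Quotient.mk _ x)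
        = proj V (Nat.le_succ i) (k := m) (Quotient.mk _ y) :=
      Quot.sound (Relation.EqvGen.rel _ _ hdxy)
    have := Quotient.exact (hinj hfx)
    exact hxy (heq x y this)
  omega

lemma tele (Φ : ℕ → ℕ) (hmono : ∀ j, Φ j ≤ Φ (j + 1)) :
    ∀ (n : ℕ) (S : Finset ℕ), (∀ j ∈ S, j < n) → (∀ j ∈ S, Φ j + 1 ≤ Φ (j + 1)) →
      S.card + Φ 0 ≤ Φ n := by
  intro n
  induction n with
  | zero =>
      intro S h1 _
      have : S = ∅ := Finset.eq_empty_of_forall_notMem (fun j hj => by have := h1 j hj; omega)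
      simp [this]
  | succ n ih =>
      intro S h1 h2
      by_cases hn : n ∈ S
      · have hs : (S.erase n).card + Φ 0 ≤ Φ n := by
          refine ih _ (fun j hj => ?_) (fun j hj => h2 j (Finset.mem_of_mem_erase hj))
          have := h1 j (Finset.mem_of_mem_erase hj)
          have := Finset.ne_of_mem_erase hj
          omega
        have h3 := h2 n hn
        have hc : S.card = (S.erase n).card + 1 := by
          rw [Finset.card_erase_of_mem hn]
          have : 0 < S.card := Finset.card_pos.2 ⟨n, hn⟩
          omega
        omega
      · have h4 := ih S (fun j hj => by
          have := h1 j hj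
          have : j ≠ n := fun h => hn (h ▸ hj)
          omega) h2
        have := hmono n
        omega

end Stmt13Aux

open Stmt13Aux

open scoped Classical in
/-- For a finite nonempty set `V` of vectors in `A^D` and `c ≥ 1`, letting `cap_c(x,y)` be
the `c` smallest coordinates at which `x` and `y` differ (all of them if fewer than `c`),
the union `cap_c(V)` over all pairs of distinct vectors has size at most `c·(|V| - 1)`. -/
theorem stmt13 {A : Type*} (D : ℕ) (hD : 0 < D)
    (V : Finset (Fin D → A)) (hV : V.Nonempty) (c : ℕ) (hc : 1 ≤ c) :
    ((V ×ˢ V).biUnion fun q =>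
      (Finset.univ.filter fun b : Fin D => q.1 b ≠ q.2 b).filter fun b =>
        ((Finset.univ.filter fun b' : Fin D => q.1 b' ≠ q.2 b').filter
          fun b' => b' < b).card < c).card
      ≤ c * (V.card - 1) := by
  classical
  set n := V.card with hn
  have hn1 : 1 ≤ n := Finset.card_pos.2 hV
  set Φ : ℕ → ℕ := fun i => ∑ k ∈ Finset.range c, CC V i k with hΦ
  have hmono : ∀ j, Φ j ≤ Φ (j + 1) :=
    fun j => Finset.sum_le_sum (fun k _ => CC_mono V (Nat.le_succ j))
  have hΦ0 : Φ 0 = c := by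
    simp [hΦ, CC_zero V hV]
  have hΦD : Φ D ≤ c * n := by
    calc Φ D ≤ ∑ _k ∈ Finset.range c, n := Finset.sum_le_sum (fun k _ => CC_le V D k)
      _ = c * n := by simp [mul_comm]
  set cap := ((V ×ˢ V).biUnion fun q =>
      (Finset.univ.filter fun b : Fin D => q.1 b ≠ q.2 b).filter fun b =>
        ((Finset.univ.filter fun b' : Fin D => q.1 b' ≠ q.2 b').filter
          fun b' => b' < b).card < c) with hcap
  set S : Finset ℕ := cap.image Fin.val with hS
  have hScard : S.card = cap.card := Finset.card_image_of_injective _ Fin.val_injective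
  -- the filter card in the statement is `dd`
  have hddeq : ∀ (q : (Fin D → A) × (Fin D → A)) (b : Fin D),
      ((Finset.univ.filter fun b' : Fin D => q.1 b' ≠ q.2 b').filter
        fun b' => b' < b).card = dd (b : ℕ) q.1 q.2 := by
    intro q b
    rw [Finset.filter_filter, dd]
    congr 1
  have hstep : ∀ j ∈ S, Φ j + 1 ≤ Φ (j + 1) := by
    intro j hj
    obtain ⟨b, hb, rfl⟩ := Finset.mem_image.1 hj
    obtain ⟨q, hq, hbq⟩ := Finset.mem_biUnion.1 hb
    rw [Finset.mem_filter, Finset.mem_filter] at hbq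
    obtain ⟨⟨_, hne⟩, hcard⟩ := hbq
    rw [hddeq q b] at hcard
    obtain ⟨hq1, hq2⟩ := Finset.mem_product.1 hq
    -- minimal pair differing at coordinate b
    set P := (V ×ˢ V).filter (fun q' : (Fin D → A) × (Fin D → A) => q'.1 b ≠ q'.2 b) with hP
    have hPne : P.Nonempty := ⟨q, Finset.mem_filter.2 ⟨hq, hne⟩⟩
    obtain ⟨q0, hq0P, hq0min⟩ := Finset.exists_min_image P (fun q' => dd (b : ℕ) q'.1 q'.2) hPne
    rw [hP, Finset.mem_filter] at hq0P
    obtain ⟨hq0mem, hq0ne⟩ := hq0P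
    obtain ⟨hq01, hq02⟩ := Finset.mem_product.1 hq0mem
    set m := dd (b : ℕ) q0.1 q0.2 with hm
    have hmc : m < c := by
      have := hq0min q (Finset.mem_filter.2 ⟨hq, hne⟩)
      omega
    have hb' : (⟨(b : ℕ), b.isLt⟩ : Fin D) = b := rfl
    have hkey : CC V (b : ℕ) m + 1 ≤ CC V ((b : ℕ) + 1) m := by
      refine key V b.isLt ⟨q0.1, hq01⟩ ⟨q0.2, hq02⟩ (by rw [hb']; exact hq0ne) le_rfl ?_
      intro z w hzw
      exact hq0min (z.1, w.1) (Finset.mem_filter.2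
        ⟨Finset.mem_product.2 ⟨z.2, w.2⟩, by rw [hb'] at hzw; exact hzw⟩)
    -- sum with strict increase at m
    have hmr : m ∈ Finset.range c := Finset.mem_range.2 hmc
    calc Φ (b : ℕ) + 1
        = (∑ k ∈ (Finset.range c).erase m, CC V (b : ℕ) k + CC V (b : ℕ) m) + 1 := by
          rw [Finset.sum_erase_add _ _ hmr]
      _ ≤ ∑ k ∈ (Finset.range c).erase m, CC V ((b : ℕ) + 1) k + CC V ((b : ℕ) + 1) m := by
          have h5 : ∑ k ∈ (Finset.range c).erase m, CC V (b : ℕ) k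
              ≤ ∑ k ∈ (Finset.range c).erase m, CC V ((b : ℕ) + 1) k :=
            Finset.sum_le_sum (fun k _ => CC_mono V (Nat.le_succ _))
          omega
      _ = Φ ((b : ℕ) + 1) := Finset.sum_erase_add _ _ hmr
  have hSlt : ∀ j ∈ S, j < D := by
    intro j hj
    obtain ⟨b, _, rfl⟩ := Finset.mem_image.1 hj
    exact b.isLt
  have hfinal := tele Φ hmono D S hSlt hstep
  rw [hΦ0, hScard] at hfinal
  have hp : n - 1 + 1 = n := Nat.succ_pred_eq_of_pos hn1
  have hmul : c * (n - 1) + c = c * n := by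
    calc c * (n - 1) + c = c * ((n - 1) + 1) := by ring
      _ = c * n := by rw [hp]
  omega
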